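/- Fix an integer g ≥ 1 and let Q_1,…,Q_{g+1}, W_1,…,W_{g+1} be real numbers. Define C_{g−1}(Q,W) = min over the following collection: Q_i + Q_j for 1 ≤ i < j ≤ g+1; W_i + W_j for 1 ≤ i < j ≤ g+1; and Q_i + W_j for all pairs 1 ≤ i, j ≤ g+1 with j ≢ i and j ≢ i−1 modulo g+1. Assume C_{g−1}(Q,W) > 0, W_1 > 0, and that Q_1 = 0 or W_{g+1} = 0. Then Q_i > 0 for all 2 ≤ i ≤ g, and W_j > 0 for all 1 ≤ j ≤ g. -/

import Mathlib

/-- The conserved quantity `C_{g−1}` of the ultra-discrete `(g+1)`-periodic Toda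
lattice: the minimum of `Q_i + Q_j` (`i < j`), `W_i + W_j` (`i < j`), and
`Q_i + W_j` (`j ≢ i, i−1 mod g+1`).  Indices are 0-based: the coordinate `Q k`
is the variable `Q_{k+1}` of the paper. -/
noncomputable def Cgm1 (g : ℕ) (Q W : Fin (g + 1) → ℝ) : ℝ :=
  sInf ({x | ∃ i j : Fin (g + 1), i < j ∧ x = Q i + Q j} ∪
        {x | ∃ i j : Fin (g + 1), i < j ∧ x = W i + W j} ∪
        {x | ∃ i j : Fin (g + 1), j ≠ i ∧ j ≠ i - 1 ∧ x = Q i + W j})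

/-- If `C_{g−1} > 0`, `W_1 > 0` and (`Q_1 = 0` or `W_{g+1} = 0`), then
`Q_i > 0` for `2 ≤ i ≤ g` and `W_j > 0` for `1 ≤ j ≤ g` (1-based subscripts;
the subscript of the 0-based coordinate `Q i` is `(i : ℕ) + 1`). -/
theorem T0_interior_positive (g : ℕ) (hg : 1 ≤ g) (Q W : Fin (g + 1) → ℝ)
    (hC : 0 < Cgm1 g Q W) (hW1 : 0 < W 0)
    (hQW : Q 0 = 0 ∨ W (Fin.last g) = 0) :
    (∀ i : Fin (g + 1), 2 ≤ (i : ℕ) + 1 → (i : ℕ) + 1 ≤ g → 0 < Q i) ∧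
    (∀ j : Fin (g + 1), (j : ℕ) + 1 ≤ g → 0 < W j) := by
  set S := ({x | ∃ i j : Fin (g + 1), i < j ∧ x = Q i + Q j} ∪
        {x | ∃ i j : Fin (g + 1), i < j ∧ x = W i + W j} ∪
        {x | ∃ i j : Fin (g + 1), j ≠ i ∧ j ≠ i - 1 ∧ x = Q i + W j}) with hSdef
  have hCs : 0 < sInf S := hC
  have hbdd : BddBelow S := by
    by_contra h
    rw [Real.sInf_of_not_bddBelow h] at hCs
    exact lt_irrefl 0 hCs
  have hpos : ∀ x ∈ S, 0 < x := fun x hx => hCs.trans_le (csInf_le hbdd hx)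
  have hQQ : ∀ i j : Fin (g + 1), i < j → 0 < Q i + Q j := fun i j hij =>
    hpos _ (Or.inl (Or.inl ⟨i, j, hij, rfl⟩))
  have hWW : ∀ i j : Fin (g + 1), i < j → 0 < W i + W j := fun i j hij =>
    hpos _ (Or.inl (Or.inr ⟨i, j, hij, rfl⟩))
  have hQWp : ∀ i j : Fin (g + 1), j ≠ i → j ≠ i - 1 → 0 < Q i + W j := fun i j h1 h2 =>
    hpos _ (Or.inr ⟨i, j, h1, h2, rfl⟩)
  rcases hQW with h0 | h0
  · constructor
    · intro i h2 hig
      have : 0 < Q 0 + Q i := hQQ 0 i (by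
        rw [Fin.lt_def]; simpa using by simp only [Fin.lt_def, Fin.val_zero]; omega)
      rw [h0] at this; linarith
    · intro j hj
      rcases Nat.eq_zero_or_pos (j : ℕ) with hz | hz
      · have : j = 0 := Fin.ext (by simpa using hz)
        rw [this]; exact hW1
      · have h1 : j ≠ 0 := by
          intro h; rw [h] at hz; simp at hz
        have h2 : j ≠ (0 : Fin (g+1)) - 1 := by
          intro h
          have : (j : ℕ) = ((0 : Fin (g+1)) - 1 : Fin (g+1)).val := by rw [h]
          rw [Fin.coe_sub_one] at this
          simp at this
          omega
        have := hQWp 0 j h1 h2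
        rw [h0] at this; linarith
  · constructor
    · intro i h2 hig
      have h1 : (Fin.last g) ≠ i := by
        intro h
        have := congrArg Fin.val h
        simp [Fin.last] at this; omega
      have hne0 : i ≠ 0 := by
        intro h; rw [h] at h2; simp at h2
      have h2' : (Fin.last g) ≠ i - 1 := by
        intro h
        have := congrArg Fin.val h
        rw [Fin.coe_sub_one] at this
        simp [Fin.last, hne0] at this
        omega
      have := hQWp i (Fin.last g) h1 h2'
      rw [h0] at this; linarith
    · intro j hj
      have : 0 < W j + W (Fin.last g) := hWW j (Fin.last g) (by
        rw [Fin.lt_def]; simp [Fin.last]; omega)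
      rw [h0] at this; linarith
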